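/- Let n ≥ 1, S = ℚ[x_1,…,x_n], and let M_n ⊆ S^{n+1} be the spline module of the fan P_2(A_n). Then the n + 1 tuples b_0 = (1, 1, …, 1) and b_k = (0, x_1^k, x_2^k, …, x_n^k) for k = 1, …, n form an S-basis of M_n. -/

import Mathlib

open MvPolynomial

/-- The ring `S = ℚ[x_1,…,x_n]`. -/
abbrev S (n : ℕ) : Type := MvPolynomial (Fin n) ℚ

/-- The Billera–Rose spline module `M_n = C^0(P_2(A_n)) ⊆ S^{n+1}`: tuples
`(f_0, f_1, …, f_n)` with `x_i ∣ f_0 - f_i` for `1 ≤ i ≤ n` and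
`x_i - x_j ∣ f_i - f_j` for `1 ≤ i < j ≤ n`. -/
noncomputable def splineModule (n : ℕ) : Submodule (S n) (Fin (n + 1) → S n) where
  carrier := {f | (∀ i : Fin n, X i ∣ f 0 - f i.succ) ∧
    ∀ i j : Fin n, i < j → (X i - X j) ∣ f i.succ - f j.succ}
  add_mem' := by
    rintro a b ⟨ha1, ha2⟩ ⟨hb1, hb2⟩
    refine ⟨fun i => ?_, fun i j hij => ?_⟩
    · simpa [sub_add_sub_comm] using dvd_add (ha1 i) (hb1 i)
    · simpa [sub_add_sub_comm] using dvd_add (ha2 i j hij) (hb2 i j hij)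
  zero_mem' := by
    refine ⟨fun i => ?_, fun i j _ => ?_⟩ <;> simp
  smul_mem' := by
    rintro c f ⟨h1, h2⟩
    refine ⟨fun i => ?_, fun i j hij => ?_⟩
    · simpa [smul_eq_mul, mul_sub] using (h1 i).mul_left c
    · simpa [smul_eq_mul, mul_sub] using (h2 i j hij).mul_left c


/-- The tuples `b_0 = (1,1,…,1)` and `b_k = (0, x_1^k, …, x_n^k)` for `k = 1, …, n`. -/
noncomputable def powerSplines (n : ℕ) : Fin (n + 1) → (Fin (n + 1) → S n) :=
  Fin.cons (fun _ => 1) (fun k => Fin.cons 0 (fun i : Fin n => X i ^ ((k : ℕ) + 1)))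

open Matrix

section aux

lemma mvPrimeX {σ : Type*} {R : Type*} [CommRing R] [IsDomain R] (i : σ) :
    Prime (MvPolynomial.X i : MvPolynomial σ R) := by
  classical
  have h1 : (MvPolynomial.X i : MvPolynomial σ R)
      = rename ((↑) : ({i} : Set σ) → σ) (X ⟨i, rfl⟩) := by simp
  rw [h1, prime_rename_iff]
  rw [← MulEquiv.prime_iff ((renameEquiv R (Equiv.equivPUnit.{_,1} (({i} : Set σ)))).trans
    (pUnitAlgEquiv R)).toRingEquiv.toMulEquiv]
  simpa using Polynomial.prime_X

lemma prime_X_sub_X {σ : Type*} {R : Type*} [CommRing R] [IsDomain R] [DecidableEq σ]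
    {b a : σ} (h : b ≠ a) :
    Prime (MvPolynomial.X b - MvPolynomial.X a : MvPolynomial σ R) := by
  let f : MvPolynomial σ R →ₐ[R] MvPolynomial σ R :=
    aeval (fun k => if k = b then X b - X a else X k)
  let g : MvPolynomial σ R →ₐ[R] MvPolynomial σ R :=
    aeval (fun k => if k = b then X b + X a else X k)
  have h1 : f.comp g = AlgHom.id R _ := by
    apply MvPolynomial.algHom_ext
    intro k
    by_cases hk : k = b
    · subst hk
      simp [f, g, if_neg h, Ne.symm h, sub_add_cancel]
    · simp [f, g, if_neg hk]
  have h2 : g.comp f = AlgHom.id R _ := by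
    apply MvPolynomial.algHom_ext
    intro k
    by_cases hk : k = b
    · subst hk
      simp [f, g, if_neg h, Ne.symm h, sub_add_cancel]
    · simp [f, g, if_neg hk]
  let e : MvPolynomial σ R ≃ₐ[R] MvPolynomial σ R := AlgEquiv.ofAlgHom f g h1 h2
  have he : e (X b) = X b - X a := by simp [e, f]
  have := (MulEquiv.prime_iff (p := (X b : MvPolynomial σ R)) e.toRingEquiv.toMulEquiv).mpr (mvPrimeX b)
  simpa [he] using this

lemma prod_primes_dvd'' {α : Type*} [CommMonoidWithZero α] [IsCancelMulZero α] {ι : Type*}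
    [DecidableEq ι] (s : Finset ι) (p : ι → α) :
    (∀ i ∈ s, Prime (p i)) → (∀ i ∈ s, ∀ j ∈ s, i ≠ j → ¬ p i ∣ p j) →
    ∀ F : α, (∀ i ∈ s, p i ∣ F) → (∏ i ∈ s, p i) ∣ F := by
  induction s using Finset.induction_on with
  | empty => intro _ _ F _; simp
  | @insert a s ha ih =>
    intro hp hnd F hd
    obtain ⟨G, rfl⟩ := hd a (Finset.mem_insert_self a s)
    rw [Finset.prod_insert ha]
    refine mul_dvd_mul_left (p a) ?_
    refine ih (fun i hi => hp i (Finset.mem_insert_of_mem hi))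
      (fun i hi j hj hij => hnd i (Finset.mem_insert_of_mem hi) j
        (Finset.mem_insert_of_mem hj) hij) G (fun i hi => ?_)
    have hpi := hp i (Finset.mem_insert_of_mem hi)
    have : p i ∣ p a * G := hd i (Finset.mem_insert_of_mem hi)
    exact (hpi.dvd_or_dvd this).resolve_left
      (hnd i (Finset.mem_insert_of_mem hi) a (Finset.mem_insert_self a s)
        (fun h => ha (h ▸ hi)))

end aux

/-- **Theorem**: the `n+1` tuples `b_0 = (1,1,…,1)` and `b_k = (0, x_1^k, …, x_n^k)`,
`k = 1, …, n`, form an `S`-basis of the spline module `M_n = C^0(P_2(A_n))`. -/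
theorem power_splines_basis (n : ℕ) (hn : 1 ≤ n) :
    ∃ b : Module.Basis (Fin (n + 1)) (S n) (splineModule n),
      ∀ k : Fin (n + 1), (b k : Fin (n + 1) → S n) = powerSplines n k := by
  classical
  set t : Fin (n + 1) → S n := Fin.cons 0 (fun i => X i) with ht
  have t0 : t 0 = 0 := rfl
  have tsucc : ∀ r : Fin n, t r.succ = X r := fun r => by simp [ht]
  set V : Matrix (Fin (n + 1)) (Fin (n + 1)) (S n) := Matrix.vandermonde t with hV
  have hVapp : ∀ i k, V i k = t i ^ (k : ℕ) := fun i k => rfl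
  -- primality of the Vandermonde factors
  have hprime : ∀ i j : Fin (n + 1), i < j → Prime (t j - t i) := by
    intro i j hij
    rcases Fin.eq_zero_or_eq_succ j with rfl | ⟨b, rfl⟩
    · exact absurd hij (by simp)
    rcases Fin.eq_zero_or_eq_succ i with rfl | ⟨a, rfl⟩
    · rw [t0, tsucc, sub_zero]; exact mvPrimeX b
    · rw [tsucc, tsucc]
      exact prime_X_sub_X (fun hba => (Fin.succ_lt_succ_iff.mp hij).ne (hba ▸ rfl))
  -- non-divisibility between distinct factors
  have hnotdvd : ∀ i j k l : Fin (n + 1), i < j → k < l → ¬(i = k ∧ j = l) →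
      ¬ (t j - t i) ∣ (t l - t k) := by
    intro i j k l hij hkl hne hdvd
    set v : Fin (n + 1) → ℚ := fun m => if m = j then ((i : ℕ) : ℚ) else ((m : ℕ) : ℚ) with hv
    let e : S n →+* ℚ := (aeval (R := ℚ) (fun r : Fin n => v r.succ)).toRingHom
    have he : ∀ m : Fin (n + 1), e (t m) = v m := by
      intro m
      rcases Fin.eq_zero_or_eq_succ m with rfl | ⟨r, rfl⟩
      · rw [t0, map_zero, hv]
        simp [(Fin.pos_iff_ne_zero.mp (lt_of_le_of_lt (Fin.zero_le i) hij)).symm]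
      · rw [tsucc]; simp [e]
    have h0 : e (t j - t i) = 0 := by
      rw [map_sub, he, he, hv]
      simp [if_neg (ne_of_lt hij)]
    have hq : e (t l - t k) = 0 := by
      obtain ⟨c, hc⟩ := hdvd
      rw [hc, RingHom.map_mul, h0, zero_mul]
    rw [map_sub, he, he] at hq
    have hvlk : v l = v k := by linarith [sub_eq_zero.mp hq]
    simp only [hv] at hvlk
    by_cases hlj : l = j
    · have hkj : k ≠ j := (hlj ▸ hkl).ne
      rw [if_pos hlj, if_neg hkj] at hvlk
      exact hne ⟨Fin.ext (Nat.cast_injective hvlk), hlj.symm⟩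
    · rw [if_neg hlj] at hvlk
      by_cases hkj : k = j
      · rw [if_pos hkj] at hvlk
        have : (l : ℕ) = (i : ℕ) := Nat.cast_injective hvlk
        have : l = i := Fin.ext this
        subst this
        exact absurd (hij.trans (hkj ▸ hkl)) (lt_irrefl _)
      · rw [if_neg hkj] at hvlk
        exact hkl.ne (Fin.ext (Nat.cast_injective hvlk)).symm
  have hDne : V.det ≠ 0 := by
    rw [hV, Matrix.det_vandermonde]
    refine Finset.prod_ne_zero_iff.mpr (fun i _ => Finset.prod_ne_zero_iff.mpr
      (fun j hj => (hprime i j (Finset.mem_Ioi.mp hj)).ne_zero))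
  -- the columns of V
  have hps : ∀ k i : Fin (n + 1), powerSplines n k i = t i ^ (k : ℕ) := by
    intro k i
    refine Fin.cases ?_ (fun m => ?_) k
    · simp [powerSplines]
    · refine Fin.cases ?_ (fun r => ?_) i
      · simp [powerSplines, t0, Fin.val_succ, zero_pow]
      · simp [powerSplines, tsucc, Fin.val_succ]
  have hcolmem : ∀ k : Fin (n + 1), (fun i => V i k) ∈ splineModule n := by
    intro k
    constructor
    · intro r
      have := sub_dvd_pow_sub_pow (t 0) (t r.succ) (k : ℕ)
      rw [t0, tsucc, zero_sub] at this
      show X r ∣ V 0 k - V r.succ k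
      rw [hVapp, hVapp, t0, tsucc]
      exact (neg_dvd).mp this
    · intro a b _
      have := sub_dvd_pow_sub_pow (t a.succ) (t b.succ) (k : ℕ)
      rw [tsucc, tsucc] at this
      show X a - X b ∣ V a.succ k - V b.succ k
      rw [hVapp, hVapp, tsucc, tsucc]
      exact this
  -- injectivity of mulVecLin
  have hinj : Function.Injective V.mulVecLin := by
    intro c d hcd
    have h0 : V *ᵥ (c - d) = 0 := by
      have : V.mulVecLin (c - d) = 0 := by rw [map_sub, hcd, sub_self]
      simpa [Matrix.mulVecLin_apply] using this
    have h1 : V.det • (c - d) = 0 := by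
      have := congrArg (fun w => V.adjugate *ᵥ w) h0
      simpa [Matrix.mulVec_mulVec, Matrix.adjugate_mul, Matrix.smul_mulVec,
        Matrix.one_mulVec] using this
    have h2 : c - d = 0 := by
      funext i
      have := congrFun h1 i
      simp only [Pi.smul_apply, smul_eq_mul, Pi.zero_apply] at this
      exact (mul_eq_zero.mp this).resolve_left hDne
    exact sub_eq_zero.mp h2
  -- range = splineModule
  have hrange : LinearMap.range V.mulVecLin = splineModule n := by
    apply le_antisymm
    · rintro _ ⟨c, rfl⟩
      have : V.mulVecLin c = ∑ k : Fin (n + 1), c k • (fun i => V i k) := by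
        funext i
        simp [Matrix.mulVecLin_apply, Matrix.mulVec, dotProduct, mul_comm,
          Finset.sum_apply]
      rw [this]
      exact Submodule.sum_mem _ (fun k _ => Submodule.smul_mem _ _ (hcolmem k))
    · intro g hg
      obtain ⟨hg1, hg2⟩ := hg
      have hdvd2 : ∀ i j : Fin (n + 1), i < j → (t j - t i) ∣ (g j - g i) := by
        intro i j hij
        rcases Fin.eq_zero_or_eq_succ j with rfl | ⟨b, rfl⟩
        · exact absurd hij (by simp)
        rcases Fin.eq_zero_or_eq_succ i with rfl | ⟨a, rfl⟩
        · rw [t0, tsucc, sub_zero]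
          have := hg1 b
          rw [show g 0 - g b.succ = -(g b.succ - g 0) by ring] at this
          exact (dvd_neg).mp this
        · rw [tsucc, tsucc]
          have hab : a < b := Fin.succ_lt_succ_iff.mp hij
          have := hg2 a b hab
          rw [show X a - X b = -(X b - X a : S n) by ring,
            show g a.succ - g b.succ = -(g b.succ - g a.succ) by ring] at this
          exact dvd_neg.mp (neg_dvd.mp this)
      -- det V divides each cramer entry
      have hDdvd : ∀ k : Fin (n + 1), V.det ∣ Matrix.cramer V g k := by
        intro k
        have hdet : V.det = ∏ x ∈ (Finset.univ.sigma fun i : Fin (n + 1) =>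
            Finset.Ioi i), (t x.2 - t x.1) := by
          rw [hV, Matrix.det_vandermonde, Finset.prod_sigma]
        rw [hdet]
        refine prod_primes_dvd'' _ _ ?_ ?_ _ ?_
        · rintro ⟨i, j⟩ hx
          exact hprime i j (Finset.mem_Ioi.mp (Finset.mem_sigma.mp hx).2)
        · rintro ⟨i, j⟩ hx ⟨k', l⟩ hy hne
          refine hnotdvd i j k' l (Finset.mem_Ioi.mp (Finset.mem_sigma.mp hx).2)
            (Finset.mem_Ioi.mp (Finset.mem_sigma.mp hy).2) ?_
          rintro ⟨rfl, rfl⟩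
          exact hne rfl
        · rintro ⟨i, j⟩ hx
          have hij : i < j := Finset.mem_Ioi.mp (Finset.mem_sigma.mp hx).2
          set p : S n := t j - t i with hp
          set M := V.updateCol k g with hM
          set q := Ideal.Quotient.mk (Ideal.span {p}) with hq
          have hrows : (M.map q) i = (M.map q) j := by
            funext c
            simp only [Matrix.map_apply]
            rw [Ideal.Quotient.eq]
            rw [Ideal.mem_span_singleton]
            by_cases hck : c = k
            · subst hck
              rw [hM]
              simp only [Matrix.updateCol_self]
              exact (dvd_sub_comm).mp (hdvd2 i j hij)
            · rw [hM]
              simp only [Matrix.updateCol_apply, if_neg hck]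
              rw [hVapp, hVapp]
              exact (dvd_sub_comm).mp (sub_dvd_pow_sub_pow (t j) (t i) (c : ℕ))
          have hdet0 : q M.det = 0 := by
            rw [RingHom.map_det]
            exact Matrix.det_zero_of_row_eq (ne_of_lt hij) hrows
          rw [Matrix.cramer_apply]
          rw [← Ideal.mem_span_singleton, ← Ideal.Quotient.eq_zero_iff_mem]
          exact hdet0
      choose c hc using hDdvd
      refine ⟨c, ?_⟩
      have h1 : V *ᵥ Matrix.cramer V g = V.det • g := Matrix.mulVec_cramer V g
      have h2 : Matrix.cramer V g = V.det • c := funext fun k => by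
        rw [hc k]; rfl
      rw [h2, Matrix.mulVec_smul] at h1
      funext i
      have := congrFun h1 i
      simp only [Pi.smul_apply, smul_eq_mul] at this
      exact mul_left_cancel₀ hDne this
  -- assemble the basis
  let eq1 : (Fin (n + 1) → S n) ≃ₗ[S n] LinearMap.range V.mulVecLin :=
    LinearEquiv.ofInjective V.mulVecLin hinj
  let eq2 : (Fin (n + 1) → S n) ≃ₗ[S n] splineModule n :=
    eq1.trans (LinearEquiv.ofEq _ _ hrange)
  refine ⟨(Pi.basisFun (S n) (Fin (n + 1))).map eq2, fun k => ?_⟩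
  have hb : ((Pi.basisFun (S n) (Fin (n + 1))).map eq2 k : Fin (n + 1) → S n)
      = V.mulVecLin (Pi.single k 1) := by
    rw [Module.Basis.map_apply]
    simp only [Pi.basisFun_apply]
    rfl
  rw [hb]
  funext i
  rw [Matrix.mulVecLin_apply, Matrix.mulVec_single]
  simp only [MulOpposite.op_one, one_smul]; show V i k = _
  rw [hVapp, hps]
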